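/- Let m ≤ n be natural numbers with m odd and n even. Then γ'_s(K_{m,n}) = min(3m − 1, max(2m, n)). -/

import Mathlib

open scoped Classical

noncomputable def edgeFin {V : Type*} [Fintype V] (G : SimpleGraph V) : Finset (Sym2 V) :=
  Finset.univ.filter (· ∈ G.edgeSet)

noncomputable def closedNbhd {V : Type*} [Fintype V] (G : SimpleGraph V) (e : Sym2 V) :
    Finset (Sym2 V) :=
  (edgeFin G).filter (fun e' => ∃ v, v ∈ e ∧ v ∈ e')

def IsSEDF {V : Type*} [Fintype V] (G : SimpleGraph V) (f : Sym2 V → ℤ) : Prop :=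
  (∀ e ∈ edgeFin G, f e = 1 ∨ f e = -1) ∧
  ∀ e ∈ edgeFin G, 1 ≤ ∑ e' ∈ closedNbhd G e, f e'

noncomputable def vsum {V : Type*} [Fintype V] (G : SimpleGraph V) (f : Sym2 V → ℤ) (v : V) : ℤ :=
  ∑ e ∈ (edgeFin G).filter (fun e => v ∈ e), f e

noncomputable def gammaS {V : Type*} [Fintype V] (G : SimpleGraph V) : ℤ :=
  sInf {z : ℤ | ∃ f, IsSEDF G f ∧ z = ∑ e ∈ edgeFin G, f e}

def IsLGraph {V : Type*} [Fintype V] (m n : ℕ) (G : SimpleGraph V) : Prop :=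
  Fintype.card V = (n + 1) * (m * n + m + 1) ∧
  ∃ P : Fin (n + 1) → Finset V,
    (∀ v : V, ∃! i, v ∈ P i) ∧
    (∀ i, (P i).card = m * n + m + 1) ∧
    (∀ u ∈ P 0, ∀ v ∈ P 0, u ≠ v → G.Adj u v) ∧
    (∀ i, i ≠ 0 → ∀ u ∈ P i, ∀ v ∈ P i, ¬ G.Adj u v) ∧
    (∀ i, i ≠ 0 → ∀ v ∈ P i, ((P 0).filter (G.Adj v)).card = m) ∧
    (∀ i, i ≠ 0 → ∀ v ∈ P 0, ((P i).filter (G.Adj v)).card = m) ∧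
    (∀ i j, i ≠ 0 → j ≠ 0 → i ≠ j → ∀ u ∈ P i, ∀ v ∈ P j, ¬ G.Adj u v)

def MConnected {V : Type*} [Fintype V] (m : ℕ) (G : SimpleGraph V) : Prop :=
  m < Fintype.card V ∧
  ∀ S : Finset V, S.card < m → (G.induce ((↑S : Set V)ᶜ)).Connected

def IsElementary {V : Type*} (H : SimpleGraph V) : Prop :=
  (∀ v, (H.neighborSet v).ncard ≤ 2) ∧
  ∀ v, (H.neighborSet v).ncard = 1 → ∀ w, H.Adj v w → (H.neighborSet w).ncard = 1

open Finset

section SEDFproof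


variable {m n : ℕ}

def be (i : Fin m) (j : Fin n) : Sym2 (Fin m ⊕ Fin n) := s(Sum.inl i, Sum.inr j)

lemma be_inj : Function.Injective (fun p : Fin m × Fin n => be p.1 p.2) := by
  rintro ⟨i, j⟩ ⟨i', j'⟩ h
  simp only [be, Sym2.eq, Sym2.rel_iff', Prod.mk.injEq] at h
  rcases h with ⟨h1, h2⟩ | ⟨h1, h2⟩ <;> simp_all

lemma edgeFin_eq :
    edgeFin (completeBipartiteGraph (Fin m) (Fin n)) =
      Finset.univ.image (fun p : Fin m × Fin n => be p.1 p.2) := by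
  ext e
  simp only [edgeFin, Finset.mem_filter, Finset.mem_univ, true_and, Finset.mem_image]
  induction e using Sym2.ind with
  | _ x y =>
    constructor
    · intro h
      rw [SimpleGraph.mem_edgeSet] at h
      rcases h with ⟨hx, hy⟩ | ⟨hx, hy⟩
      · obtain ⟨i, rfl⟩ := Sum.isLeft_iff.1 hx
        obtain ⟨j, rfl⟩ := Sum.isRight_iff.1 hy
        exact ⟨(i, j), rfl⟩
      · obtain ⟨j, rfl⟩ := Sum.isRight_iff.1 hx
        obtain ⟨i, rfl⟩ := Sum.isLeft_iff.1 hy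
        exact ⟨(i, j), Sym2.eq_swap⟩
    · rintro ⟨⟨i, j⟩, h⟩
      rw [← h]
      simp [be, SimpleGraph.mem_edgeSet]


lemma shares_iff (i i' : Fin m) (j j' : Fin n) :
    (∃ v, v ∈ be i j ∧ v ∈ be i' j') ↔ (i' = i ∨ j' = j) := by
  constructor
  · rintro ⟨v, hv1, hv2⟩
    simp only [be, Sym2.mem_iff] at hv1 hv2
    rcases hv1 with rfl | rfl <;> rcases hv2 with h | h <;> simp_all
  · rintro (h | h)
    · exact ⟨Sum.inl i, by simp [be], by simp [be, h]⟩
    · exact ⟨Sum.inr j, by simp [be], by simp [be, h]⟩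

lemma closedNbhd_eq (i : Fin m) (j : Fin n) :
    closedNbhd (completeBipartiteGraph (Fin m) (Fin n)) (be i j) =
      (Finset.univ.filter (fun p : Fin m × Fin n => p.1 = i ∨ p.2 = j)).image
        (fun p => be p.1 p.2) := by
  rw [closedNbhd, edgeFin_eq]
  ext e
  simp only [Finset.mem_filter, Finset.mem_image, Finset.mem_univ, true_and]
  constructor
  · rintro ⟨⟨p, rfl⟩, hv⟩
    exact ⟨p, (shares_iff i p.1 j p.2).1 hv, rfl⟩
  · rintro ⟨p, hp, rfl⟩
    exact ⟨⟨p, rfl⟩, (shares_iff i p.1 j p.2).2 hp⟩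

lemma sum_closedNbhd (f : Sym2 (Fin m ⊕ Fin n) → ℤ) (i : Fin m) (j : Fin n) :
    ∑ e' ∈ closedNbhd (completeBipartiteGraph (Fin m) (Fin n)) (be i j), f e' =
      (∑ j', f (be i j')) + (∑ i', f (be i' j)) - f (be i j) := by
  rw [closedNbhd_eq, Finset.sum_image (fun a _ b _ h => be_inj h)]
  have hsplit : (Finset.univ.filter (fun p : Fin m × Fin n => p.1 = i ∨ p.2 = j)) =
      (Finset.univ.filter (fun p : Fin m × Fin n => p.1 = i)) ∪
      (Finset.univ.filter (fun p : Fin m × Fin n => p.2 = j)) := by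
    rw [← Finset.filter_or]
  have hinter : (Finset.univ.filter (fun p : Fin m × Fin n => p.1 = i)) ∩
      (Finset.univ.filter (fun p : Fin m × Fin n => p.2 = j)) = {(i, j)} := by
    rw [← Finset.filter_and]
    ext ⟨a, b⟩
    simp [Prod.ext_iff]
  have key := Finset.sum_union_inter (s₁ := Finset.univ.filter (fun p : Fin m × Fin n => p.1 = i))
    (s₂ := Finset.univ.filter (fun p : Fin m × Fin n => p.2 = j))
    (f := fun p : Fin m × Fin n => f (be p.1 p.2))
  rw [hinter] at key
  rw [hsplit]
  have h1 : ∑ p ∈ Finset.univ.filter (fun p : Fin m × Fin n => p.1 = i), f (be p.1 p.2)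
      = ∑ j', f (be i j') := by
    rw [Finset.sum_filter]
    rw [Fintype.sum_prod_type]
    simp [Finset.sum_ite_eq']
  have h2 : ∑ p ∈ Finset.univ.filter (fun p : Fin m × Fin n => p.2 = j), f (be p.1 p.2)
      = ∑ i', f (be i' j) := by
    rw [Finset.sum_filter, Fintype.sum_prod_type]
    simp [Finset.sum_ite_eq']
  rw [h1, h2] at key
  simp only [Finset.sum_singleton] at key
  omega

lemma sum_edges (f : Sym2 (Fin m ⊕ Fin n) → ℤ) :
    ∑ e ∈ edgeFin (completeBipartiteGraph (Fin m) (Fin n)), f e =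
      ∑ i, ∑ j, f (be i j) := by
  rw [edgeFin_eq, Finset.sum_image (fun a _ b _ h => be_inj h), Fintype.sum_prod_type]



def MatSEDF (g : Fin m → Fin n → ℤ) : Prop :=
  (∀ i j, g i j = 1 ∨ g i j = -1) ∧
  ∀ i j, 1 ≤ (∑ j', g i j') + (∑ i', g i' j) - g i j

lemma be_mem_edgeFin (i : Fin m) (j : Fin n) :
    be i j ∈ edgeFin (completeBipartiteGraph (Fin m) (Fin n)) := by
  rw [edgeFin_eq]
  exact Finset.mem_image.2 ⟨(i, j), Finset.mem_univ _, rfl⟩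

lemma mem_edgeFin_ex {e : Sym2 (Fin m ⊕ Fin n)}
    (he : e ∈ edgeFin (completeBipartiteGraph (Fin m) (Fin n))) :
    ∃ i j, e = be i j := by
  rw [edgeFin_eq] at he
  obtain ⟨p, -, rfl⟩ := Finset.mem_image.1 he
  exact ⟨p.1, p.2, rfl⟩

noncomputable def extf (g : Fin m → Fin n → ℤ) : Sym2 (Fin m ⊕ Fin n) → ℤ :=
  fun e => if h : ∃ p : Fin m × Fin n, be p.1 p.2 = e then g h.choose.1 h.choose.2 else 1

lemma extf_be (g : Fin m → Fin n → ℤ) (i : Fin m) (j : Fin n) :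
    extf g (be i j) = g i j := by
  have h : ∃ p : Fin m × Fin n, be p.1 p.2 = be i j := ⟨(i, j), rfl⟩
  rw [extf, dif_pos h]
  have := h.choose_spec
  have h2 : h.choose = (i, j) := be_inj (a₁ := h.choose) (a₂ := (i,j)) this
  rw [h2]

lemma setEq :
    {z : ℤ | ∃ f, IsSEDF (completeBipartiteGraph (Fin m) (Fin n)) f ∧
      z = ∑ e ∈ edgeFin (completeBipartiteGraph (Fin m) (Fin n)), f e} =
    {z : ℤ | ∃ g : Fin m → Fin n → ℤ, MatSEDF g ∧ z = ∑ i, ∑ j, g i j} := by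
  ext z
  constructor
  · rintro ⟨f, ⟨hpm, hdom⟩, rfl⟩
    refine ⟨fun i j => f (be i j), ⟨fun i j => hpm _ (be_mem_edgeFin i j), ?_⟩, sum_edges f⟩
    intro i j
    have := hdom _ (be_mem_edgeFin i j)
    rwa [sum_closedNbhd] at this
  · rintro ⟨g, ⟨hpm, hdom⟩, rfl⟩
    refine ⟨extf g, ⟨?_, ?_⟩, ?_⟩
    · intro e he
      obtain ⟨i, j, rfl⟩ := mem_edgeFin_ex he
      rw [extf_be]; exact hpm i j
    · intro e he
      obtain ⟨i, j, rfl⟩ := mem_edgeFin_ex he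
      rw [sum_closedNbhd]
      simp only [extf_be]
      exact hdom i j
    · rw [sum_edges]
      simp only [extf_be]


-- shift lemma
lemma cnt_shift (b c N j : ℕ) :
    (((range (b + c)).filter (fun x => x % N = j)).card) =
      ((range b).filter (fun x => x % N = j)).card +
      ((range c).filter (fun u => (b + u) % N = j)).card := by
  rw [Finset.range_add, Finset.filter_union, Finset.card_union_of_disjoint, Finset.filter_map,
    Finset.card_map]
  · rfl
  · refine Finset.disjoint_filter_filter ?_
    rw [Finset.disjoint_left]
    intro x hx hx2
    simp only [Finset.mem_range, Finset.mem_map, addLeftEmbedding_apply] at hx hx2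
    omega

lemma cnt_partition (k : ℕ → ℕ) (M N j : ℕ) :
    ∑ i ∈ range M, ((range (k i)).filter
        (fun u => ((∑ x ∈ range i, k x) + u) % N = j)).card =
      ((range (∑ i ∈ range M, k i)).filter (fun x => x % N = j)).card := by
  induction M with
  | zero => simp
  | succ M ih =>
    rw [Finset.sum_range_succ, Finset.sum_range_succ, cnt_shift, ih]

lemma cnt_multiples (N a j : ℕ) (hj : j < N) :
    ((range (N * a)).filter (fun x => x % N = j)).card = a := by
  have : (range (N * a)).filter (fun x => x % N = j) =
      (range a).image (fun t => t * N + j) := by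
    ext x
    simp only [Finset.mem_filter, Finset.mem_range, Finset.mem_image]
    constructor
    · intro ⟨h1, h2⟩
      refine ⟨x / N, ?_, ?_⟩
      · by_contra h
        push_neg at h
        have : N * a ≤ x := by
          calc N * a ≤ N * (x / N) := Nat.mul_le_mul_left _ h
          _ ≤ x := Nat.mul_div_le x N
        omega
      · have h1 := Nat.div_add_mod x N
        have h2 : N * (x / N) = x / N * N := mul_comm _ _
        omega
    · rintro ⟨t, ht, rfl⟩
      constructor
      · calc t * N + j < t * N + N := by omega
        _ = (t+1) * N := by ring
        _ ≤ a * N := Nat.mul_le_mul_right _ (by omega)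
        _ = N * a := mul_comm _ _
      · rw [add_comm, Nat.add_mul_mod_self_right, Nat.mod_eq_of_lt hj]
  have hN : 0 < N := lt_of_le_of_lt (Nat.zero_le j) hj
  rw [this, Finset.card_image_of_injective _
    (fun x y h => Nat.eq_of_mul_eq_mul_right hN (by omega)), Finset.card_range]

section RR
variable (M N : ℕ) (k : ℕ → ℕ)

def KK (i : ℕ) : ℕ := ∑ x ∈ range i, k x

def PP (i j : ℕ) : Prop := ∃ u, u < k i ∧ (KK k i + u) % N = j

lemma fiber_card (hN : 0 < N) (i j : ℕ) (hki : k i ≤ N) :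
    ((range (k i)).filter (fun u => (KK k i + u) % N = j)).card
      = if PP N k i j then 1 else 0 := by
  by_cases h : PP N k i j
  · rw [if_pos h]
    obtain ⟨u0, hu0, hu0m⟩ := h
    have : (range (k i)).filter (fun u => (KK k i + u) % N = j) = {u0} := by
      ext u
      simp only [Finset.mem_filter, Finset.mem_range, Finset.mem_singleton]
      constructor
      · rintro ⟨hu, hum⟩
        have hmod : (KK k i + u) % N = (KK k i + u0) % N := by rw [hum, hu0m]
        have := (Nat.ModEq.add_left_cancel' (KK k i) ·) (hmod : Nat.ModEq N _ _)
        have h2 : u % N = u0 % N := Nat.ModEq.add_left_cancel' (KK k i) hmod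
        rw [Nat.mod_eq_of_lt (lt_of_lt_of_le hu hki),
          Nat.mod_eq_of_lt (lt_of_lt_of_le hu0 hki)] at h2
        exact h2
      · rintro rfl
        exact ⟨hu0, hu0m⟩
    rw [this, Finset.card_singleton]
  · rw [if_neg h]
    rw [Finset.card_eq_zero, Finset.filter_eq_empty_iff]
    intro u hu
    exact fun hc => h ⟨u, Finset.mem_range.1 hu, hc⟩

lemma row_card (hN : 0 < N) (i : ℕ) (hki : k i ≤ N) :
    ((Finset.univ : Finset (Fin N)).filter (fun j => PP N k i j.val)).card = k i := by
  have key := Finset.card_eq_sum_card_fiberwise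
    (f := fun u : ℕ => (⟨(KK k i + u) % N, Nat.mod_lt _ hN⟩ : Fin N))
    (s := range (k i)) (t := Finset.univ) (fun x _ => Finset.mem_univ _)
  rw [Finset.card_range] at key
  rw [key]
  refine Eq.symm ?_
  have : ∀ j : Fin N,
      ((range (k i)).filter (fun u => (⟨(KK k i + u) % N, Nat.mod_lt _ hN⟩ : Fin N) = j)).card
      = if PP N k i j.val then 1 else 0 := by
    intro j
    rw [← fiber_card N k hN i j.val hki]
    congr 1
    ext u
    simp [Fin.ext_iff]
  calc ∑ j : Fin N, ((range (k i)).filter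
        (fun u => (⟨(KK k i + u) % N, Nat.mod_lt _ hN⟩ : Fin N) = j)).card
      = ∑ j : Fin N, if PP N k i j.val then 1 else 0 := Finset.sum_congr rfl (fun j _ => this j)
    _ = _ := (Finset.card_filter _ _).symm

lemma col_card (a : ℕ) (hN : 0 < N) (hk : ∀ i, i < M → k i ≤ N)
    (hsum : ∑ x ∈ range M, k x = N * a) (j : Fin N) :
    ((Finset.univ : Finset (Fin M)).filter (fun i => PP N k i.val j.val)).card = a := by
  have h1 : ((Finset.univ : Finset (Fin M)).filter (fun i => PP N k i.val j.val)).card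
      = ∑ i : Fin M, if PP N k i.val j.val then 1 else 0 := Finset.card_filter _ _
  rw [h1]
  have h2 : ∀ i : Fin M, (if PP N k i.val j.val then 1 else 0)
      = ((range (k i.val)).filter (fun u => (KK k i.val + u) % N = j.val)).card :=
    fun i => (fiber_card N k hN i.val j.val (hk i.val i.isLt)).symm
  rw [Finset.sum_congr rfl (fun i _ => h2 i), Fin.sum_univ_eq_sum_range
    (fun x => ((range (k x)).filter (fun u => (KK k x + u) % N = j.val)).card) M]
  simp only [KK]
  exact (cnt_partition k M N j.val).trans (by rw [hsum, cnt_multiples N a j.val j.isLt])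

lemma RR (a : ℕ) (hN : 0 < N) (hk : ∀ i, i < M → k i ≤ N)
    (hsum : ∑ x ∈ range M, k x = N * a) :
    ∃ B : Fin M → Fin N → ℤ, (∀ i j, B i j = 1 ∨ B i j = -1) ∧
      (∀ i : Fin M, ∑ j, B i j = 2 * (k i.val : ℤ) - N) ∧
      (∀ j : Fin N, ∑ i, B i j = 2 * (a : ℤ) - M) := by
  refine ⟨fun i j => if PP N k i.val j.val then 1 else -1, fun i j => by by_cases h : PP N k i.val j.val <;> simp [h], ?_, ?_⟩
  · intro i
    have : ∀ j : Fin N, (if PP N k i.val j.val then (1:ℤ) else -1)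
        = 2 * (if PP N k i.val j.val then 1 else 0) - 1 := fun j => by split <;> ring
    rw [Finset.sum_congr rfl (fun j _ => this j), Finset.sum_sub_distrib, ← Finset.mul_sum,
      Finset.sum_boole, row_card N k hN i.val (hk i.val i.isLt)]
    simp
  · intro j
    have : ∀ i : Fin M, (if PP N k i.val j.val then (1:ℤ) else -1)
        = 2 * (if PP N k i.val j.val then 1 else 0) - 1 := fun i => by split <;> ring
    rw [Finset.sum_congr rfl (fun i _ => this i), Finset.sum_sub_distrib, ← Finset.mul_sum,
      Finset.sum_boole, col_card M N k a hN hk hsum j]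
    simp

end RR

lemma lower_bound (hmn : m ≤ n) (hm : Odd m) (hn : Even n)
    (g : Fin m → Fin n → ℤ) (hg : MatSEDF g) :
    min (3 * (m : ℤ) - 1) (max (2 * (m : ℤ)) (n : ℤ)) ≤ ∑ i, ∑ j, g i j := by
  obtain ⟨c, hc⟩ := hm
  have hm1 : 1 ≤ m := by omega
  obtain ⟨d, hd⟩ := hn
  have hn2 : 2 ≤ n := by omega
  have hmz : Odd (m : ℤ) := ⟨c, by exact_mod_cast hc⟩
  have hnz : Even (n : ℤ) := ⟨d, by exact_mod_cast hd⟩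
  have hSC : ∑ i, ∑ j, g i j = ∑ j, ∑ i, g i j := Finset.sum_comm
  have hpm := hg.1
  have hReven : ∀ i, Even (∑ j, g i j) := by
    intro i
    have h1 : Even (∑ j, (g i j + 1)) := by
      apply Finset.even_sum
      intro j _
      rcases hpm i j with h | h <;> rw [h] <;> decide
    rw [Finset.sum_add_distrib, Finset.sum_const, Finset.card_univ, Fintype.card_fin,
      nsmul_eq_mul, mul_one] at h1
    exact (Int.even_add.1 h1).2 hnz
  have hCodd : ∀ j, Odd (∑ i, g i j) := by
    intro j
    have h1 : Even (∑ i, (g i j + 1)) := by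
      apply Finset.even_sum
      intro i _
      rcases hpm i j with h | h <;> rw [h] <;> decide
    rw [Finset.sum_add_distrib, Finset.sum_const, Finset.card_univ, Fintype.card_fin,
      nsmul_eq_mul, mul_one] at h1
    rw [← Int.not_even_iff_odd]
    intro hE
    exact (Int.not_odd_iff_even.mpr ((Int.even_add.1 h1).1 hE)) hmz
  have hdom2 : ∀ i j, 2 ≤ (∑ j', g i j') + (∑ i', g i' j) - g i j := by
    intro i j
    have h1 := hg.2 i j
    have heven : Even ((∑ j', g i j') + ((∑ i', g i' j) - g i j)) := by
      refine (hReven i).add (Odd.sub_odd (hCodd j) ?_)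
      rcases hpm i j with h | h <;> rw [h]
      · exact ⟨0, by ring⟩
      · exact ⟨-1, by ring⟩
    rcases heven with ⟨z, hz⟩
    omega
  by_cases hA : ∀ i, 1 ≤ ∑ j, g i j
  · by_cases hB : ∀ j, 1 ≤ ∑ i, g i j
    · have hR2 : ∀ i, 2 ≤ ∑ j, g i j := by
        intro i
        rcases hReven i with ⟨x, hx⟩
        have := hA i
        omega
      have h2m : 2 * (m : ℤ) ≤ ∑ i, ∑ j, g i j := by
        calc 2 * (m : ℤ) = ∑ _i : Fin m, (2 : ℤ) := by
              rw [Finset.sum_const, Finset.card_univ, Fintype.card_fin, nsmul_eq_mul]; ring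
          _ ≤ _ := Finset.sum_le_sum (fun i _ => hR2 i)
      have hnS : (n : ℤ) ≤ ∑ i, ∑ j, g i j := by
        rw [hSC]
        calc (n : ℤ) = ∑ _j : Fin n, (1 : ℤ) := by
              rw [Finset.sum_const, Finset.card_univ, Fintype.card_fin, nsmul_eq_mul]; ring
          _ ≤ _ := Finset.sum_le_sum (fun j _ => hB j)
      exact le_trans (min_le_right _ _) (max_le h2m hnS)
    · push_neg at hB
      obtain ⟨j0, hj0⟩ := hB
      have hj0' : ∑ i, g i j0 ≤ -1 := by
        rcases hCodd j0 with ⟨y, hy⟩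
        omega
      have hsum : ∑ i, ((2 : ℤ) - (∑ i', g i' j0) + g i j0) ≤ ∑ i, ∑ j, g i j :=
        Finset.sum_le_sum (fun i _ => by have := hdom2 i j0; omega)
      rw [Finset.sum_add_distrib, Finset.sum_const, Finset.card_univ, Fintype.card_fin,
        nsmul_eq_mul] at hsum
      have hfin : 3 * (m : ℤ) - 1 ≤ ∑ i, ∑ j, g i j := by
        have hmz1 : (1 : ℤ) ≤ (m : ℤ) := by exact_mod_cast hm1
        nlinarith [hsum, hj0', hmz1]
      exact le_trans (min_le_left _ _) hfin
  · push_neg at hA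
    obtain ⟨i0, hi0⟩ := hA
    have hi0' : ∑ j, g i0 j ≤ 0 := by
      rcases hReven i0 with ⟨x, hx⟩
      omega
    have hsum : ∑ j, ((2 : ℤ) - (∑ j', g i0 j') + g i0 j) ≤ ∑ j, ∑ i, g i j :=
      Finset.sum_le_sum (fun j _ => by have := hdom2 i0 j; omega)
    rw [Finset.sum_add_distrib, Finset.sum_const, Finset.card_univ, Fintype.card_fin,
      nsmul_eq_mul] at hsum
    have h2n : 2 * (n : ℤ) ≤ ∑ j, ∑ i, g i j := by
      have hnz1 : (1 : ℤ) ≤ (n : ℤ) := by exact_mod_cast le_trans hm1 hmn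
      nlinarith [hsum, hi0', hnz1]
    rw [hSC]
    refine le_trans (min_le_right _ _) (le_trans (max_le ?_ ?_) h2n)
    · have : (m : ℤ) ≤ (n : ℤ) := by exact_mod_cast hmn
      omega
    · omega

-- Case 2: 2m ≤ n ≤ 3m-1, target n
lemma upper_case2 (c d : ℕ) (h2m : 2 * (2*c+1) ≤ 2*d) (h3m : 2*d ≤ 3*(2*c+1) - 1) :
    ∃ g : Fin (2*c+1) → Fin (2*d) → ℤ, MatSEDF g ∧ ∑ i, ∑ j, g i j = (2*d : ℤ) := by
  set m := 2*c+1 with hm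
  set n := 2*d with hn
  have hm1 : 1 ≤ m := by omega
  have hn2 : 2 ≤ n := by omega
  set k : ℕ → ℕ := fun i => if i = 0 then n - m + 1 else d + 1 with hk
  have hksum : ∑ x ∈ range m, k x = n * (c+1) := by
    rw [Finset.sum_range_succ']
    have e0 : k 0 = n - m + 1 := by simp [hk]
    have es : ∀ x : ℕ, k (x+1) = d + 1 := fun x => by simp [hk]
    rw [Finset.sum_congr rfl (fun x _ => es x), e0,
      Finset.sum_const, Finset.card_range, smul_eq_mul]
    zify [show m ≤ n by omega]
    push_cast [hm, hn]
    ring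
  obtain ⟨B, hBpm, hBrow, hBcol⟩ := RR m n k (c+1) (by omega)
    (fun i _ => by by_cases h : i = 0 <;> simp [hk, h] <;> omega) hksum
  have hrow : ∀ i : Fin m, 2 ≤ ∑ j, B i j := by
    intro i
    rw [hBrow i]
    by_cases h : i.val = 0
    · have e0 : k i.val = n - m + 1 := by simp [hk, h]
      rw [e0]
      have : ((n - m + 1 : ℕ) : ℤ) = (n : ℤ) - m + 1 := by
        zify [show m ≤ n by omega]
      rw [this]
      push_cast [hm, hn]
      omega
    · have e1 : k i.val = d + 1 := by simp [hk, h]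
      rw [e1]
      push_cast [hn]
      omega
  have hcol : ∀ j : Fin n, (1:ℤ) = ∑ i, B i j := by
    intro j
    rw [hBcol j]
    push_cast [hm]
    ring
  refine ⟨B, ⟨hBpm, ?_⟩, ?_⟩
  · intro i j
    have h1 := hrow i
    have h2 := hcol j
    rcases hBpm i j with h | h <;> omega
  · have : ∀ i : Fin m, ∑ j, B i j = ∑ j, B i j := fun _ => rfl
    rw [Finset.sum_comm]
    rw [Finset.sum_congr rfl (fun j _ => (hcol j).symm)]
    rw [Finset.sum_const, Finset.card_univ, Fintype.card_fin, nsmul_eq_mul]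
    push_cast [hn]
    ring

-- Case 1: m ≤ n ≤ 2m, target 2m
lemma upper_case1 (c d : ℕ) (hmn : 2*c+1 ≤ 2*d) (h2m : 2*d ≤ 2*(2*c+1)) :
    ∃ g : Fin (2*c+1) → Fin (2*d) → ℤ, MatSEDF g ∧ ∑ i, ∑ j, g i j = 2*(2*c+1 : ℤ) := by
  have hd1 : c + 1 ≤ d := by omega
  set k : ℕ → ℕ := fun j => if j = 0 then 3*c+2-d else c+1 with hk
  have hksum : ∑ x ∈ range (2*d), k x = (2*c+1) * (d+1) := by
    have h2d : 2*d = 2*d-1+1 := by omega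
    rw [h2d, Finset.sum_range_succ']
    have e0 : k 0 = 3*c+2-d := by simp [hk]
    have es : ∀ x : ℕ, k (x+1) = c + 1 := fun x => by simp [hk]
    rw [Finset.sum_congr rfl (fun x _ => es x), e0,
      Finset.sum_const, Finset.card_range, smul_eq_mul]
    zify [show d ≤ 3*c+2 by omega, show 1 ≤ 2*d by omega]
    ring
  obtain ⟨B, hBpm, hBrow, hBcol⟩ := RR (2*d) (2*c+1) k (d+1) (by omega)
    (fun j _ => by by_cases h : j = 0 <;> simp [hk, h] <;> omega) hksum
  have hrowg : ∀ i : Fin (2*c+1), ∑ j, B j i = 2 := by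
    intro i
    rw [hBcol i]
    push_cast
    ring
  have hcolg : ∀ j : Fin (2*d), 1 ≤ ∑ i : Fin (2*c+1), B j i := by
    intro j
    rw [hBrow j]
    by_cases h : j.val = 0
    · have e0 : k j.val = 3*c+2-d := by simp [hk, h]
      rw [e0]
      have : ((3*c+2-d : ℕ) : ℤ) = 3*(c:ℤ)+2-d := by zify [show d ≤ 3*c+2 by omega]
      rw [this]
      push_cast
      omega
    · have e1 : k j.val = c+1 := by simp [hk, h]
      rw [e1]
      push_cast
      omega
  refine ⟨fun i j => B j i, ⟨fun i j => hBpm j i, ?_⟩, ?_⟩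
  · intro i j
    have h1 := hrowg i
    have h2 := hcolg j
    show 1 ≤ (∑ j', B j' i) + (∑ i', B j i') - B j i
    rcases hBpm j i with h | h <;> rw [h] <;> omega
  · show ∑ i : Fin (2*c+1), ∑ j : Fin (2*d), B j i = _
    rw [Finset.sum_congr rfl (fun i _ => hrowg i), Finset.sum_const, Finset.card_univ,
      Fintype.card_fin, nsmul_eq_mul]
    push_cast
    ring

lemma split_sum_nat (M c : ℕ) (hcM : c ≤ M) (A B : ℕ) :
    ∑ x ∈ range M, (if x < c then A else B) = c * A + (M - c) * B := by
  rw [Finset.range_eq_Ico, ← Finset.sum_Ico_consecutive _ (Nat.zero_le c) hcM]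
  have h1 : ∑ x ∈ Finset.Ico 0 c, (if x < c then A else B) = c * A := by
    rw [Finset.sum_congr rfl (fun x hx => if_pos (Finset.mem_Ico.1 hx).2),
      Finset.sum_const, Nat.card_Ico, smul_eq_mul, Nat.sub_zero]
  have h2 : ∑ x ∈ Finset.Ico c M, (if x < c then A else B) = (M - c) * B := by
    rw [Finset.sum_congr rfl (fun x hx => if_neg (by have := (Finset.mem_Ico.1 hx).1; omega)),
      Finset.sum_const, Nat.card_Ico, smul_eq_mul]
  rw [h1, h2]

lemma split_sum_int (M c : ℕ) (hcM : c ≤ M) (A B : ℤ) :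
    ∑ x ∈ range M, (if x < c then A else B) = (c : ℤ) * A + ((M : ℤ) - c) * B := by
  rw [Finset.range_eq_Ico, ← Finset.sum_Ico_consecutive _ (Nat.zero_le c) hcM]
  have h1 : ∑ x ∈ Finset.Ico 0 c, (if x < c then A else B) = (c : ℤ) * A := by
    rw [Finset.sum_congr rfl (fun x hx => if_pos (Finset.mem_Ico.1 hx).2),
      Finset.sum_const, Nat.card_Ico, nsmul_eq_mul]
    simp
  have h2 : ∑ x ∈ Finset.Ico c M, (if x < c then A else B) = ((M : ℤ) - c) * B := by
    rw [Finset.sum_congr rfl (fun x hx => if_neg (by have := (Finset.mem_Ico.1 hx).1; omega)),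
      Finset.sum_const, Nat.card_Ico, nsmul_eq_mul]
    rw [Nat.cast_sub hcM]
  rw [h1, h2]

-- Case 3: n ≥ 3m+1, target 3m-1
lemma upper_case3 (c t N : ℕ) (ht : 1 ≤ t) (hN : N = t + 6*c + 2) :
    ∃ g : Fin (2*c+1) → Fin (t+N) → ℤ, MatSEDF g ∧
      ∑ i, ∑ j, g i j = 3*(2*(c:ℤ)+1) - 1 := by
  set k : ℕ → ℕ := fun i => if i < c then 3*c+3 else t+3*c+2 with hk
  have hksum : ∑ x ∈ range (2*c+1), k x = N * (c+1) := by
    rw [hk, split_sum_nat (2*c+1) c (by omega)]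
    have e1 : 2*c+1-c = c+1 := by omega
    rw [e1, hN]
    ring
  obtain ⟨B, hBpm, hBrow, hBcol⟩ := RR (2*c+1) N k (c+1) (by omega)
    (fun i _ => by by_cases h : i < c <;> simp [hk, h] <;> omega) hksum
  set g : Fin (2*c+1) → Fin (t+N) → ℤ :=
    fun i => Fin.append (fun _ : Fin t => if (i : ℕ) < c then 1 else -1) (B i) with hg
  have hgL : ∀ (i : Fin (2*c+1)) (j0 : Fin t),
      g i (Fin.castAdd N j0) = if (i : ℕ) < c then 1 else -1 := by
    intro i j0
    rw [hg]
    exact Fin.append_left _ _ j0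
  have hgR : ∀ (i : Fin (2*c+1)) (j0 : Fin N), g i (Fin.natAdd t j0) = B i j0 := by
    intro i j0
    rw [hg]
    exact Fin.append_right _ _ j0
  have hgpm : ∀ i j, g i j = 1 ∨ g i j = -1 := by
    intro i j
    induction j using Fin.addCases with
    | left j0 => rw [hgL]; split <;> simp
    | right j0 => rw [hgR]; exact hBpm i j0
  have hrowg : ∀ i : Fin (2*c+1), ∑ j, g i j = if (i : ℕ) < c then 4 else 2 := by
    intro i
    rw [Fin.sum_univ_add]
    have e1 : ∑ j0 : Fin t, g i (Fin.castAdd N j0)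
        = (t : ℤ) * (if (i : ℕ) < c then 1 else -1) := by
      rw [Finset.sum_congr rfl (fun j0 _ => hgL i j0), Finset.sum_const, Finset.card_univ,
        Fintype.card_fin, nsmul_eq_mul]
    have e2 : ∑ j0 : Fin N, g i (Fin.natAdd t j0) = 2 * ((k i.val : ℤ)) - N := by
      rw [Finset.sum_congr rfl (fun j0 _ => hgR i j0), hBrow i]
    rw [e1, e2]
    by_cases h : (i : ℕ) < c
    · rw [if_pos h, if_pos h]
      have ek : k i.val = 3*c+3 := by simp [hk, h]
      rw [ek, hN]
      push_cast
      ring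
    · rw [if_neg h, if_neg h]
      have ek : k i.val = t+3*c+2 := by simp [hk, h]
      rw [ek, hN]
      push_cast
      ring
  have hrow2 : ∀ i : Fin (2*c+1), 2 ≤ ∑ j, g i j := by
    intro i
    rw [hrowg i]
    split <;> omega
  have hcolL : ∀ j0 : Fin t, ∑ i, g i (Fin.castAdd N j0) = -1 := by
    intro j0
    rw [Finset.sum_congr rfl (fun i _ => hgL i j0)]
    rw [Fin.sum_univ_eq_sum_range (fun x => if x < c then (1:ℤ) else -1) (2*c+1)]
    rw [split_sum_int (2*c+1) c (by omega)]
    push_cast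
    ring
  have hcolR : ∀ j0 : Fin N, ∑ i, g i (Fin.natAdd t j0) = 1 := by
    intro j0
    rw [Finset.sum_congr rfl (fun i _ => hgR i j0), hBcol j0]
    push_cast
    ring
  refine ⟨g, ⟨hgpm, ?_⟩, ?_⟩
  · intro i j
    induction j using Fin.addCases with
    | left j0 =>
      rw [hgL, hcolL, hrowg]
      by_cases h : (i : ℕ) < c <;> simp [h]
    | right j0 =>
      rw [hgR, hcolR]
      have h1 := hrow2 i
      rcases hBpm i j0 with h | h <;> rw [h] <;> omega
  · rw [Finset.sum_congr rfl (fun i _ => hrowg i)]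
    rw [Fin.sum_univ_eq_sum_range (fun x => if x < c then (4:ℤ) else 2) (2*c+1)]
    rw [split_sum_int (2*c+1) c (by omega)]
    push_cast
    ring

lemma upper_bound {m n : ℕ} (hmn : m ≤ n) (hm : Odd m) (hn : Even n) :
    ∃ g : Fin m → Fin n → ℤ, MatSEDF g ∧
      ∑ i, ∑ j, g i j = min (3*(m:ℤ)-1) (max (2*(m:ℤ)) (n:ℤ)) := by
  obtain ⟨c, hc⟩ := hm
  obtain ⟨d, hd⟩ := hn
  have hc' : m = 2*c+1 := by omega
  have hd' : n = 2*d := by omega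
  subst hc'
  subst hd'
  by_cases h1 : 2*d ≤ 2*(2*c+1)
  · obtain ⟨g, hg, hsum⟩ := upper_case1 c d hmn h1
    refine ⟨g, hg, ?_⟩
    rw [hsum]
    push_cast
    omega
  · by_cases h2 : 2*d ≤ 3*(2*c+1) - 1
    · obtain ⟨g, hg, hsum⟩ := upper_case2 c d (by omega) h2
      refine ⟨g, hg, ?_⟩
      rw [hsum]
      push_cast
      omega
    · have hsplit : 2*d = (d - 3*c - 1) + (d + 3*c + 1) := by omega
      rw [hsplit]
      obtain ⟨g, hg, hsum⟩ := upper_case3 c (d - 3*c - 1) (d + 3*c + 1) (by omega) (by omega)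
      refine ⟨g, hg, ?_⟩
      rw [hsum]
      push_cast [show 3*c+1 ≤ d by omega]
      omega

lemma matrix_gamma {m n : ℕ} (hmn : m ≤ n) (hm : Odd m) (hn : Even n) :
    sInf {z : ℤ | ∃ g : Fin m → Fin n → ℤ, MatSEDF g ∧ z = ∑ i, ∑ j, g i j} =
      min (3*(m:ℤ)-1) (max (2*(m:ℤ)) (n:ℤ)) := by
  apply IsLeast.csInf_eq
  constructor
  · obtain ⟨g, hg, hsum⟩ := upper_bound hmn hm hn
    exact ⟨g, hg, hsum.symm⟩
  · rintro z ⟨g, hg, rfl⟩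
    exact lower_bound hmn hm hn g hg


end SEDFproof

theorem stmt16 (m n : ℕ) (hmn : m ≤ n) (hm : Odd m) (hn : Even n) :
    gammaS (completeBipartiteGraph (Fin m) (Fin n)) =
      min (3 * (m : ℤ) - 1) (max (2 * (m : ℤ)) (n : ℤ)) := by
  rw [gammaS, setEq]
  exact matrix_gamma hmn hm hn
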